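/- Let w be an area sequence and let c_0, c_1, …, c_k be its admissible insertion positions taken in admissible order. Then for every 0 ≤ i ≤ k, the word ins_{c_i}(w) has exactly i + 2 admissible insertion positions. -/

import Mathlib

/-- The `i`-th letter of the word `w` (`1`-indexed, as in the paper);
defaults to `0` out of range. -/
def get1 (w : List ℕ) (i : ℕ) : ℕ := w.getD (i - 1) 0

/-- `w` is the area sequence of a Dyck path: the first letter is `0` and each
letter exceeds the previous one by at most one. -/
def IsAreaSeq (w : List ℕ) : Prop :=
  (w ≠ [] → get1 w 1 = 0) ∧ ∀ i, 1 ≤ i → i < w.length → get1 w (i + 1) ≤ get1 w i + 1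

/-- Insertion at position `i` (for `0 ≤ i ≤ n`): `ins w 0` prepends a `0`, and
for `1 ≤ i ≤ n`, `ins w i` inserts the letter `w_i + 1` just after position `i`. -/
def ins (w : List ℕ) (i : ℕ) : List ℕ :=
  w.take i ++ (if i = 0 then 0 else get1 w i + 1) :: w.drop i

/-- The area statistic: the sum of the letters. -/
def area (w : List ℕ) : ℕ := w.sum

/-- The dinv statistic: `dinv w = Σ_i d_i` where `d_i` is the number of `j > i`
with `w_j = w_i` or `w_j = w_i - 1`. -/
def dinv (w : List ℕ) : ℕ :=
  ∑ i ∈ Finset.Icc 1 w.length,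
    ((Finset.Ioc i w.length).filter
      (fun j => get1 w j = get1 w i ∨ get1 w j + 1 = get1 w i)).card

/-- The maximal value of a word (`0` for the empty word). -/
def maxVal (w : List ℕ) : ℕ := w.foldr max 0

/-- Positions of the letters of maximal value `m`. -/
def Maxb (w : List ℕ) : Finset ℕ :=
  (Finset.Icc 1 w.length).filter (fun i => get1 w i = maxVal w)

/-- Positions `i` with `w_i = m - 1` such that all letters after position `i`
are `< m`. -/
def Maxa (w : List ℕ) : Finset ℕ :=
  (Finset.Icc 1 w.length).filter (fun i =>
    get1 w i + 1 = maxVal w ∧ ∀ j ∈ Finset.Ioc i w.length, get1 w j < maxVal w)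

/-- The position of the leftmost letter equal to the maximal value `m` in the
rightmost block of consecutive letters equal to `m`. -/
def i0 (w : List ℕ) : ℕ :=
  ((Finset.Icc 1 w.length).filter (fun i =>
    get1 w i = maxVal w ∧ (i = 1 ∨ get1 w (i - 1) ≠ maxVal w))).sup id

/-- The admissible insertion positions of `w`, listed in admissible order:
the elements of `Maxb w` in decreasing order, then the elements of `Maxa w`
in decreasing order, then `i0 w - 1`.  The empty word has the single
admissible insertion position `0`. -/
def admissible (w : List ℕ) : List ℕ :=
  if w = [] then [0]
  else ((Maxb w).sort (· ≤ ·)).reverse ++ ((Maxa w).sort (· ≤ ·)).reverse ++ [i0 w - 1]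

/-- Auxiliary version of the map `ψ`, reading the reversed word. -/
def psiRev : List ℕ → List ℕ
  | [] => []
  | a :: u => ins (psiRev u) ((admissible (psiRev u)).getD a 0)

/-- The map `ψ`: `ψ(ε) = ε` and `ψ(u a) = ins_{c_a}(ψ(u))` where
`c_0, c_1, …, c_k` are the admissible insertion positions of `ψ(u)` in
admissible order. -/
def psi (w : List ℕ) : List ℕ := psiRev w.reverse

/-- The bounce sequence: `b_1 = 0`, and `b_i = b_{i-1} + 1` if
`b_{i-1} + 1 ≤ w_i`, otherwise `b_i = 0`. -/
def bseq (w : List ℕ) : ℕ → ℕ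
  | 0 => 0
  | 1 => 0
  | (i + 2) => if bseq w (i + 1) + 1 ≤ get1 w (i + 2) then bseq w (i + 1) + 1 else 0

/-- The bounces of `w`: positions `1 < i ≤ n` with `b_i = 0`. -/
def bounces (w : List ℕ) : Finset ℕ :=
  (Finset.Icc 2 w.length).filter (fun i => bseq w i = 0)

/-- The bounce statistic: the sum of the reversed positions `n - i + 1` of the
bounces of `w`. -/
def bounce (w : List ℕ) : ℕ := ∑ i ∈ bounces w, (w.length - i + 1)

namespace CardAdmAux

lemma get1_eq {w : List ℕ} {j : ℕ} (h1 : 1 ≤ j) (h2 : j ≤ w.length) :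
    get1 w j = w[j-1]'(by omega) := by
  simp [get1, List.getD_eq_getElem?_getD, List.getElem?_eq_getElem (by omega : j - 1 < w.length)]

lemma length_ins (w : List ℕ) {c : ℕ} (hc : c ≤ w.length) : (ins w c).length = w.length + 1 := by
  simp [ins]; omega

lemma ins_ne_nil (w : List ℕ) (c : ℕ) : ins w c ≠ [] := by
  simp [ins]

lemma get1_ins_of_le (w : List ℕ) {c j : ℕ} (hc : c ≤ w.length) (h1 : 1 ≤ j) (h : j ≤ c) :
    get1 (ins w c) j = get1 w j := by
  have hl : (w.take c).length = c := by simp; omega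
  rw [get1, ins, List.getD_append _ _ _ _ (by omega), get1]
  rw [List.getD_eq_getElem?_getD, List.getD_eq_getElem?_getD,
    List.getElem?_take_of_lt (by omega)]

lemma get1_ins_self (w : List ℕ) {c : ℕ} (hc : c ≤ w.length) :
    get1 (ins w c) (c+1) = if c = 0 then 0 else get1 w c + 1 := by
  have hl : (w.take c).length = c := by simp; omega
  rw [get1, ins, List.getD_eq_getElem?_getD, List.getElem?_append_right (by omega)]
  simp [hl]

lemma get1_ins_of_gt (w : List ℕ) {c j : ℕ} (hc : c ≤ w.length) (h : c + 2 ≤ j) :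
    get1 (ins w c) j = get1 w (j-1) := by
  obtain ⟨k, rfl⟩ : ∃ k, j = c + 2 + k := ⟨j - c - 2, by omega⟩
  have hl : (w.take c).length = c := by simp; omega
  rw [get1, ins, List.getD_eq_getElem?_getD, List.getElem?_append_right (by omega)]
  have : c + 2 + k - 1 - (w.take c).length = k + 1 := by omega
  rw [this, List.getElem?_cons_succ, List.getElem?_drop, get1, List.getD_eq_getElem?_getD]
  congr 2
  omega

lemma le_maxVal {w : List ℕ} {a : ℕ} (h : a ∈ w) : a ≤ maxVal w := by
  induction w with
  | nil => simp at h
  | cons b u ih =>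
    rcases List.mem_cons.1 h with rfl | h
    · simp [maxVal]
    · simp only [maxVal, List.foldr_cons]
      exact le_max_of_le_right (ih h)

lemma maxVal_mem {w : List ℕ} (h : w ≠ []) : maxVal w ∈ w := by
  induction w with
  | nil => simp at h
  | cons b u ih =>
    by_cases hu : u = []
    · subst hu; simp [maxVal]
    · have := ih hu
      show max b (maxVal u) ∈ b :: u
      rcases max_cases b (maxVal u) with ⟨h1, _⟩ | ⟨h1, _⟩
      · rw [h1]; exact List.mem_cons_self
      · rw [h1]; exact List.mem_cons_of_mem _ this

lemma mem_iff_get1 {w : List ℕ} {a : ℕ} :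
    a ∈ w ↔ ∃ j, 1 ≤ j ∧ j ≤ w.length ∧ get1 w j = a := by
  rw [List.mem_iff_getElem]
  constructor
  · rintro ⟨k, hk, rfl⟩
    refine ⟨k+1, by omega, by omega, ?_⟩
    simp [get1, List.getD_eq_getElem?_getD, List.getElem?_eq_getElem hk]
  · rintro ⟨j, h1, h2, rfl⟩
    refine ⟨j - 1, by omega, ?_⟩
    simp [get1, List.getD_eq_getElem?_getD, List.getElem?_eq_getElem (by omega : j - 1 < w.length)]

lemma get1_le_maxVal {w : List ℕ} {j : ℕ} (h1 : 1 ≤ j) (h2 : j ≤ w.length) :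
    get1 w j ≤ maxVal w :=
  le_maxVal (mem_iff_get1.2 ⟨j, h1, h2, rfl⟩)

lemma exists_get1_maxVal {w : List ℕ} (h : w ≠ []) :
    ∃ j, 1 ≤ j ∧ j ≤ w.length ∧ get1 w j = maxVal w :=
  mem_iff_get1.1 (maxVal_mem h)

lemma maxVal_eq_of {w : List ℕ} {M : ℕ}
    (hex : ∃ j, 1 ≤ j ∧ j ≤ w.length ∧ get1 w j = M)
    (hub : ∀ j, 1 ≤ j → j ≤ w.length → get1 w j ≤ M) : maxVal w = M := by
  obtain ⟨j, h1, h2, h3⟩ := hex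
  have hne : w ≠ [] := by rintro rfl; simp at h2; omega
  obtain ⟨p, p1, p2, p3⟩ := exists_get1_maxVal hne
  exact le_antisymm (p3 ▸ hub p p1 p2) (h3 ▸ get1_le_maxVal h1 h2)

lemma sort_rev_getD (s : Finset ℕ) {i : ℕ} (hi : i < s.card) :
    ((s.sort (· ≤ ·)).reverse.getD i 0) ∈ s ∧
    (s.filter (fun x => ((s.sort (· ≤ ·)).reverse.getD i 0) < x)).card = i := by
  set l := s.sort (· ≤ ·) with hl
  have hlen : l.length = s.card := Finset.length_sort _
  have hj : l.length - 1 - i < l.length := by omega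
  have hrev : l.reverse.getD i 0 = l[l.length - 1 - i]'hj := by
    rw [List.getD_eq_getElem?_getD,
      List.getElem?_eq_getElem (by simpa using (by omega : i < l.length)),
      List.getElem_reverse]
    rfl
  set j := l.length - 1 - i with hjdef
  set c := l[j]'hj with hc
  have hsorted : l.Pairwise (· < ·) := (Finset.sortedLT_sort s).pairwise
  have hmono : ∀ {a b : ℕ} (ha : a < l.length) (hb : b < l.length), a < b → l[a] < l[b] := by
    intro a b ha hb hab
    exact List.pairwise_iff_getElem.1 hsorted a b ha hb hab
  have hmem : ∀ {x}, x ∈ s ↔ ∃ k, ∃ hk : k < l.length, l[k] = x := by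
    intro x
    rw [← Finset.mem_sort (α := ℕ) (· ≤ ·), ← hl, List.mem_iff_getElem]
  rw [hrev]
  refine ⟨hmem.2 ⟨j, hj, rfl⟩, ?_⟩
  have himg : s.filter (fun x => c < x) = (Finset.Ioo j l.length).image (fun k => l.getD k 0) := by
    ext x
    simp only [Finset.mem_filter, Finset.mem_image, Finset.mem_Ioo]
    constructor
    · rintro ⟨hx, hcx⟩
      obtain ⟨k, hk, rfl⟩ := hmem.1 hx
      refine ⟨k, ⟨?_, hk⟩, by simp [List.getD_eq_getElem?_getD, List.getElem?_eq_getElem hk]⟩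
      by_contra hle
      push_neg at hle
      rcases lt_or_eq_of_le hle with h' | rfl
      · exact absurd (hmono hk hj h') (by omega)
      · omega
    · rintro ⟨k, ⟨hk1, hk2⟩, rfl⟩
      have : l.getD k 0 = l[k]'hk2 := by
        simp [List.getD_eq_getElem?_getD, List.getElem?_eq_getElem hk2]
      rw [this]
      exact ⟨hmem.2 ⟨k, hk2, rfl⟩, hmono hj hk2 hk1⟩
  rw [himg, Finset.card_image_of_injOn, Nat.card_Ioo]
  · omega
  · intro a ha b hb hab
    simp only [Finset.coe_Ioo, Set.mem_Ioo] at ha hb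
    have heq : l[a]'ha.2 = l[b]'hb.2 := by
      have h1 : l.getD a 0 = l[a]'ha.2 := by
        simp [List.getD_eq_getElem?_getD, List.getElem?_eq_getElem ha.2]
      have h2 : l.getD b 0 = l[b]'hb.2 := by
        simp [List.getD_eq_getElem?_getD, List.getElem?_eq_getElem hb.2]
      rw [← h1, ← h2]; exact hab
    by_contra hne
    rcases Nat.lt_or_ge a b with h' | h'
    · exact absurd heq (Nat.ne_of_lt (hmono ha.2 hb.2 h'))
    · exact absurd heq.symm (Nat.ne_of_lt (hmono hb.2 ha.2 (by omega)))

lemma mem_Maxb {w : List ℕ} {i : ℕ} :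
    i ∈ Maxb w ↔ 1 ≤ i ∧ i ≤ w.length ∧ get1 w i = maxVal w := by
  simp [Maxb, Finset.mem_filter, Finset.mem_Icc, and_assoc]

lemma mem_Maxa {w : List ℕ} {i : ℕ} :
    i ∈ Maxa w ↔ 1 ≤ i ∧ i ≤ w.length ∧ get1 w i + 1 = maxVal w ∧
      ∀ j, i < j → j ≤ w.length → get1 w j < maxVal w := by
  simp [Maxa, Finset.mem_filter, Finset.mem_Icc, Finset.mem_Ioc, and_assoc]

def S0 (w : List ℕ) : Finset ℕ :=
  (Finset.Icc 1 w.length).filter (fun i =>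
    get1 w i = maxVal w ∧ (i = 1 ∨ get1 w (i - 1) ≠ maxVal w))

lemma i0_eq (w : List ℕ) : i0 w = (S0 w).sup id := rfl

lemma mem_S0 {w : List ℕ} {i : ℕ} :
    i ∈ S0 w ↔ 1 ≤ i ∧ i ≤ w.length ∧ get1 w i = maxVal w ∧
      (i = 1 ∨ get1 w (i - 1) ≠ maxVal w) := by
  simp [S0, Finset.mem_filter, Finset.mem_Icc, and_assoc]

lemma exists_S0 {w : List ℕ} : ∀ p, 1 ≤ p → p ≤ w.length → get1 w p = maxVal w →
    ∃ q, q ∈ S0 w ∧ q ≤ p := by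
  intro p
  induction p using Nat.strong_induction_on with
  | _ p ih =>
    intro h1 h2 h3
    by_cases hc : p = 1 ∨ get1 w (p - 1) ≠ maxVal w
    · exact ⟨p, mem_S0.2 ⟨h1, h2, h3, hc⟩, le_rfl⟩
    · push_neg at hc
      obtain ⟨hp1, hp2⟩ := hc
      obtain ⟨q, hq, hqle⟩ := ih (p - 1) (by omega) (by omega) (by omega) hp2
      exact ⟨q, hq, by omega⟩

lemma S0_nonempty {w : List ℕ} (h : w ≠ []) : (S0 w).Nonempty := by
  obtain ⟨j, h1, h2, h3⟩ := exists_get1_maxVal h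
  obtain ⟨q, hq, _⟩ := exists_S0 j h1 h2 h3
  exact ⟨q, hq⟩

lemma i0_mem_S0 {w : List ℕ} (h : w ≠ []) : i0 w ∈ S0 w := by
  have hne := S0_nonempty h
  have := Finset.max'_mem (S0 w) hne
  rwa [Finset.max'_eq_sup', Finset.sup'_eq_sup] at this

lemma length_admissible_of_ne {w : List ℕ} (h : w ≠ []) :
    (admissible w).length = (Maxb w).card + (Maxa w).card + 1 := by
  simp [admissible, h, Finset.length_sort]
  omega

lemma getD_append_right' (l1 l2 : List ℕ) (k : ℕ) (h : l1.length ≤ k) :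
    (l1 ++ l2).getD k 0 = l2.getD (k - l1.length) 0 := by
  simp [List.getD_eq_getElem?_getD, List.getElem?_append_right h]

/-- Case A: insertion at an element of `Maxb`. -/
lemma caseA {w : List ℕ} {c i : ℕ} (hc : c ∈ Maxb w)
    (hfilt : ((Maxb w).filter (fun x => c < x)).card = i) :
    (Maxb (ins w c)).card = 1 ∧ (Maxa (ins w c)).card = i := by
  obtain ⟨hc1, hc2, hc3⟩ := mem_Maxb.1 hc
  set n := w.length with hn
  set m := maxVal w with hm
  have hlen' : (ins w c).length = n + 1 := length_ins w hc2
  have hx : get1 (ins w c) (c+1) = m + 1 := by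
    rw [get1_ins_self w hc2, if_neg (by omega)]; omega
  have hval : ∀ j, 1 ≤ j → j ≤ n + 1 → j ≠ c + 1 → get1 (ins w c) j ≤ m := by
    intro j h1 h2 h3
    rcases Nat.lt_or_ge j (c+1) with h' | h'
    · rw [get1_ins_of_le w hc2 h1 (by omega)]
      exact get1_le_maxVal h1 (by omega)
    · rw [get1_ins_of_gt w hc2 (by omega)]
      exact get1_le_maxVal (by omega) (by omega)
  have hmax : maxVal (ins w c) = m + 1 := by
    refine maxVal_eq_of ⟨c+1, by omega, by omega, hx⟩ ?_
    intro j h1 h2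
    rw [hlen'] at h2
    by_cases h3 : j = c + 1
    · rw [h3, hx]
    · exact le_trans (hval j h1 h2 h3) (by omega)
  have hMb : Maxb (ins w c) = {c+1} := by
    ext j
    rw [mem_Maxb, hmax, hlen', Finset.mem_singleton]
    constructor
    · rintro ⟨h1, h2, h3⟩
      by_contra h4
      have := hval j h1 h2 h4
      omega
    · rintro rfl
      exact ⟨by omega, by omega, hx⟩
  have hMa : Maxa (ins w c) = ((Maxb w).filter (fun x => c < x)).image (· + 1) := by
    ext j
    rw [mem_Maxa, hmax, hlen']
    simp only [Finset.mem_image, Finset.mem_filter, mem_Maxb]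
    constructor
    · rintro ⟨h1, h2, h3, h4⟩
      rcases Nat.lt_or_ge j (c+1) with h' | h'
      · exact absurd (h4 (c+1) (by omega) (by omega)) (by rw [hx]; omega)
      · rcases Nat.eq_or_lt_of_le h' with rfl | h''
        · rw [hx] at h3; omega
        · have hg : get1 (ins w c) j = get1 w (j-1) := get1_ins_of_gt w hc2 (by omega)
          refine ⟨j - 1, ⟨⟨by omega, by omega, by omega⟩, by omega⟩, by omega⟩
    · rintro ⟨x, ⟨⟨hx1, hx2, hx3⟩, hx4⟩, rfl⟩
      have hg : get1 (ins w c) (x+1) = get1 w x := by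
        rw [get1_ins_of_gt w hc2 (by omega)]; congr 1
      refine ⟨by omega, by omega, by rw [hg]; omega, ?_⟩
      intro l hl1 hl2
      rw [get1_ins_of_gt w hc2 (by omega)]
      have := get1_le_maxVal (w := w) (j := l - 1) (by omega) (by omega)
      omega
  refine ⟨by rw [hMb]; simp, ?_⟩
  rw [hMa, Finset.card_image_of_injective _ (add_left_injective 1), hfilt]

/-- Case B: insertion at an element of `Maxa`. -/
lemma caseB {w : List ℕ} {c k : ℕ} (hc : c ∈ Maxa w)
    (hfilt : ((Maxa w).filter (fun x => c < x)).card = k) :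
    (Maxb (ins w c)).card = (Maxb w).card + 1 ∧ (Maxa (ins w c)).card = k := by
  obtain ⟨hc1, hc2, hc3, hall⟩ := mem_Maxa.1 hc
  set n := w.length with hn
  set m := maxVal w with hm
  have hm1 : 1 ≤ m := by omega
  have hlen' : (ins w c).length = n + 1 := length_ins w hc2
  have hx : get1 (ins w c) (c+1) = m := by
    rw [get1_ins_self w hc2, if_neg (by omega)]; omega
  have hmax : maxVal (ins w c) = m := by
    refine maxVal_eq_of ⟨c+1, by omega, by omega, hx⟩ ?_
    intro j h1 h2
    rw [hlen'] at h2
    rcases Nat.lt_or_ge j (c+1) with h' | h'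
    · rw [get1_ins_of_le w hc2 h1 (by omega)]; exact get1_le_maxVal h1 (by omega)
    · rcases Nat.eq_or_lt_of_le h' with rfl | h''
      · rw [hx]
      · rw [get1_ins_of_gt w hc2 (by omega)]
        exact get1_le_maxVal (by omega) (by omega)
  have hMbsub : ∀ x ∈ Maxb w, x < c := by
    intro x hxm
    obtain ⟨hx1, hx2, hx3⟩ := mem_Maxb.1 hxm
    rcases Nat.lt_or_ge x c with h' | h'
    · exact h'
    · rcases Nat.eq_or_lt_of_le h' with rfl | h''
      · omega
      · exact absurd (hall x h'' hx2) (by omega)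
  have hMb : Maxb (ins w c) = insert (c+1) (Maxb w) := by
    ext j
    rw [mem_Maxb, hmax, hlen', Finset.mem_insert, mem_Maxb]
    constructor
    · rintro ⟨h1, h2, h3⟩
      rcases Nat.lt_or_ge j (c+1) with h' | h'
      · rw [get1_ins_of_le w hc2 h1 (by omega)] at h3
        exact Or.inr ⟨h1, by omega, h3⟩
      · rcases Nat.eq_or_lt_of_le h' with rfl | h''
        · exact Or.inl rfl
        · rw [get1_ins_of_gt w hc2 (by omega)] at h3
          exact absurd (hall (j-1) (by omega) (by omega)) (by omega)
    · rintro (rfl | hjm)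
      · exact ⟨by omega, by omega, hx⟩
      · have hjc := hMbsub j (mem_Maxb.2 hjm)
        obtain ⟨h1, h2, h3⟩ := hjm
        exact ⟨h1, by omega, by rw [get1_ins_of_le w hc2 h1 (by omega)]; exact h3⟩
  have hMa : Maxa (ins w c) = ((Maxa w).filter (fun x => c < x)).image (· + 1) := by
    ext j
    rw [mem_Maxa, hmax, hlen']
    simp only [Finset.mem_image, Finset.mem_filter, mem_Maxa]
    constructor
    · rintro ⟨h1, h2, h3, h4⟩
      rcases Nat.lt_or_ge j (c+1) with h' | h'
      · exact absurd (h4 (c+1) (by omega) (by omega)) (by rw [hx]; omega)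
      · rcases Nat.eq_or_lt_of_le h' with rfl | h''
        · rw [hx] at h3; omega
        · rw [get1_ins_of_gt w hc2 (by omega)] at h3
          refine ⟨j - 1, ⟨⟨by omega, by omega, h3, ?_⟩, by omega⟩, by omega⟩
          intro l hl1 hl2
          have := h4 (l+1) (by omega) (by omega)
          rwa [get1_ins_of_gt w hc2 (by omega), Nat.add_sub_cancel] at this
    · rintro ⟨x, ⟨⟨hx1, hx2, hx3, hx4⟩, hx5⟩, rfl⟩
      have hg : get1 (ins w c) (x+1) = get1 w x := by
        rw [get1_ins_of_gt w hc2 (by omega)]; congr 1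
      refine ⟨by omega, by omega, by rw [hg]; omega, ?_⟩
      intro l hl1 hl2
      rw [get1_ins_of_gt w hc2 (by omega)]
      exact hx4 (l-1) (by omega) (by omega)
  constructor
  · rw [hMb, Finset.card_insert_of_notMem (fun h => by have := hMbsub _ h; omega)]
  · rw [hMa, Finset.card_image_of_injective _ (add_left_injective 1), hfilt]

/-- Case C2: insertion at `i0 w - 1` when the maximum is positive. -/
lemma caseC2 {w : List ℕ} (hw : IsAreaSeq w) (hne : w ≠ []) (hm1 : 1 ≤ maxVal w) :
    (Maxb (ins w (i0 w - 1))).card = (Maxb w).card + 1 ∧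
    (Maxa (ins w (i0 w - 1))).card = (Maxa w).card := by
  set n := w.length with hn
  set m := maxVal w with hm
  obtain ⟨hq1, hq2, hq3, hq4⟩ := mem_S0.1 (i0_mem_S0 hne)
  set q := i0 w with hqdef
  have hq5 : q ≠ 1 := by
    intro h
    rw [h, hw.1 hne] at hq3
    omega
  have hq6 : get1 w (q-1) ≠ m := by tauto
  set c := q - 1 with hcdef
  have hc1 : 1 ≤ c := by omega
  have hc2 : c ≤ n := by omega
  have hcq : c + 1 = q := by omega
  have hcm : get1 w c = m - 1 := by
    have h1 := hw.2 c (by omega) (by omega)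
    have h2 := get1_le_maxVal (w := w) (j := c) (by omega) (by omega)
    rw [hcq] at h1
    omega
  have hlen' : (ins w c).length = n + 1 := length_ins w hc2
  have hx : get1 (ins w c) (c+1) = m := by
    rw [get1_ins_self w hc2, if_neg (by omega)]; omega
  have hmax : maxVal (ins w c) = m := by
    refine maxVal_eq_of ⟨c+1, by omega, by omega, hx⟩ ?_
    intro j h1 h2
    rw [hlen'] at h2
    rcases Nat.lt_or_ge j (c+1) with h' | h'
    · rw [get1_ins_of_le w hc2 h1 (by omega)]; exact get1_le_maxVal h1 (by omega)
    · rcases Nat.eq_or_lt_of_le h' with rfl | h''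
      · rw [hx]
      · rw [get1_ins_of_gt w hc2 (by omega)]
        exact get1_le_maxVal (by omega) (by omega)
  set f : ℕ → ℕ := fun j => if j ≤ c then j else j + 1 with hf
  have hfinj : Function.Injective f := by
    intro a b hab
    simp only [hf] at hab
    split_ifs at hab <;> omega
  have hMb : Maxb (ins w c) = insert (c+1) ((Maxb w).image f) := by
    ext j
    rw [mem_Maxb, hmax, hlen', Finset.mem_insert, Finset.mem_image]
    constructor
    · rintro ⟨h1, h2, h3⟩
      rcases Nat.lt_or_ge j (c+1) with h' | h'
      · rw [get1_ins_of_le w hc2 h1 (by omega)] at h3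
        exact Or.inr ⟨j, mem_Maxb.2 ⟨h1, by omega, h3⟩, by simp [hf]; omega⟩
      · rcases Nat.eq_or_lt_of_le h' with rfl | h''
        · exact Or.inl rfl
        · rw [get1_ins_of_gt w hc2 (by omega)] at h3
          refine Or.inr ⟨j - 1, mem_Maxb.2 ⟨by omega, by omega, h3⟩, ?_⟩
          simp only [hf]
          rw [if_neg (by omega)]
          omega
    · rintro (rfl | ⟨x, hxm, rfl⟩)
      · exact ⟨by omega, by omega, hx⟩
      · obtain ⟨h1, h2, h3⟩ := mem_Maxb.1 hxm
        by_cases h' : x ≤ c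
        · simp only [hf, if_pos h']
          exact ⟨h1, by omega, by rw [get1_ins_of_le w hc2 h1 h']; exact h3⟩
        · simp only [hf, if_neg h']
          refine ⟨by omega, by omega, ?_⟩
          rw [get1_ins_of_gt w hc2 (by omega), Nat.add_sub_cancel]
          exact h3
  have hnotmem : c + 1 ∉ (Maxb w).image f := by
    simp only [Finset.mem_image, not_exists, not_and]
    intro x hxm
    obtain ⟨h1, h2, h3⟩ := mem_Maxb.1 hxm
    simp only [hf]
    split_ifs with h'
    · have : x ≠ c := fun h => by rw [h, hcm] at h3; omega
      omega
    · omega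
  have hMaq : ∀ p ∈ Maxa w, c < p := by
    intro p hpm
    obtain ⟨hp1, hp2, hp3, hp4⟩ := mem_Maxa.1 hpm
    by_contra h'
    push_neg at h'
    exact absurd (hp4 q (by omega) hq2) (by omega)
  have hMa : Maxa (ins w c) = (Maxa w).image (· + 1) := by
    ext j
    rw [mem_Maxa, hmax, hlen']
    simp only [Finset.mem_image, mem_Maxa]
    constructor
    · rintro ⟨h1, h2, h3, h4⟩
      rcases Nat.lt_or_ge j (c+1) with h' | h'
      · exact absurd (h4 (c+1) (by omega) (by omega)) (by rw [hx]; omega)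
      · rcases Nat.eq_or_lt_of_le h' with rfl | h''
        · rw [hx] at h3; omega
        · rw [get1_ins_of_gt w hc2 (by omega)] at h3
          refine ⟨j - 1, ⟨by omega, by omega, h3, ?_⟩, by omega⟩
          intro l hl1 hl2
          have := h4 (l+1) (by omega) (by omega)
          rwa [get1_ins_of_gt w hc2 (by omega), Nat.add_sub_cancel] at this
    · rintro ⟨p, ⟨hp1, hp2, hp3, hp4⟩, rfl⟩
      have hcp : c < p := hMaq p (mem_Maxa.2 ⟨hp1, hp2, hp3, hp4⟩)
      have hg : get1 (ins w c) (p+1) = get1 w p := by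
        rw [get1_ins_of_gt w hc2 (by omega)]; congr 1
      refine ⟨by omega, by omega, by rw [hg]; omega, ?_⟩
      intro l hl1 hl2
      rw [get1_ins_of_gt w hc2 (by omega)]
      exact hp4 (l-1) (by omega) (by omega)
  constructor
  · rw [hMb, Finset.card_insert_of_notMem hnotmem,
      Finset.card_image_of_injective _ hfinj]
  · rw [hMa, Finset.card_image_of_injective _ (add_left_injective 1)]

/-- Case C1: all letters are `0`. -/
lemma caseC1 {w : List ℕ} (hne : w ≠ []) (hm0 : maxVal w = 0) :
    i0 w = 1 ∧ (Maxb w).card = w.length ∧ (Maxa w).card = 0 ∧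
    (Maxb (ins w 0)).card = w.length + 1 ∧ (Maxa (ins w 0)).card = 0 := by
  set n := w.length with hn
  have hn1 : 1 ≤ n := by
    rcases w with _ | ⟨a, u⟩
    · simp at hne
    · simp [hn]
  have hzero : ∀ j, 1 ≤ j → j ≤ n → get1 w j = 0 := by
    intro j h1 h2
    have := get1_le_maxVal (w := w) h1 h2
    omega
  have hS0 : S0 w = {1} := by
    ext j
    rw [mem_S0, Finset.mem_singleton, hm0]
    constructor
    · rintro ⟨h1, h2, h3, h4 | h4⟩
      · exact h4
      · by_contra h5
        exact h4 (hzero (j-1) (by omega) (by omega))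
    · rintro rfl
      exact ⟨le_rfl, hn1, hzero 1 le_rfl hn1, Or.inl rfl⟩
  have hi0 : i0 w = 1 := by
    rw [i0_eq, hS0]
    simp
  have hMb : Maxb w = Finset.Icc 1 n := by
    ext j
    rw [mem_Maxb, Finset.mem_Icc, hm0]
    exact ⟨fun ⟨h1, h2, _⟩ => ⟨h1, h2⟩, fun ⟨h1, h2⟩ => ⟨h1, h2, hzero j h1 h2⟩⟩
  have hMa : Maxa w = ∅ := by
    ext j
    rw [mem_Maxa, hm0]
    simp
  have hlen' : (ins w 0).length = n + 1 := length_ins w (by omega)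
  have hzero' : ∀ j, 1 ≤ j → j ≤ n + 1 → get1 (ins w 0) j = 0 := by
    intro j h1 h2
    rcases Nat.eq_or_lt_of_le h1 with rfl | h'
    · rw [show (1 : ℕ) = 0 + 1 from rfl, get1_ins_self w (by omega)]
      simp
    · rw [get1_ins_of_gt w (by omega) (by omega)]
      exact hzero (j-1) (by omega) (by omega)
  have hmax' : maxVal (ins w 0) = 0 := by
    refine maxVal_eq_of ⟨1, le_rfl, by omega, hzero' 1 le_rfl (by omega)⟩ ?_
    intro j h1 h2
    rw [hlen'] at h2
    rw [hzero' j h1 h2]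
  have hMb' : Maxb (ins w 0) = Finset.Icc 1 (n+1) := by
    ext j
    rw [mem_Maxb, Finset.mem_Icc, hmax', hlen']
    exact ⟨fun ⟨h1, h2, _⟩ => ⟨h1, h2⟩, fun ⟨h1, h2⟩ => ⟨h1, h2, hzero' j h1 h2⟩⟩
  have hMa' : Maxa (ins w 0) = ∅ := by
    ext j
    rw [mem_Maxa, hmax']
    simp
  exact ⟨hi0, by rw [hMb, Nat.card_Icc]; omega, by rw [hMa]; simp,
    by rw [hMb', Nat.card_Icc]; omega, by rw [hMa']; simp⟩

end CardAdmAux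

open CardAdmAux in
/-- If `c_0, …, c_k` are the admissible insertion positions of an area sequence
`w` taken in admissible order, then the word obtained by inserting at `c_i` has
exactly `i + 2` admissible insertion positions. -/
theorem card_admissible_ins (w : List ℕ) (hw : IsAreaSeq w)
    (i : ℕ) (hi : i < (admissible w).length) :
    (admissible (ins w ((admissible w).getD i 0))).length = i + 2 := by
  by_cases hne : w = []
  · subst hne
    have hi0 : i = 0 := by simpa [admissible] using hi
    subst hi0
    have h1 : ins ([] : List ℕ) ((admissible []).getD 0 0) = [0] := rfl
    rw [h1, length_admissible_of_ne (by simp)]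
    have hmv : maxVal [0] = 0 := rfl
    have hb : Maxb [0] = {1} := by
      ext j
      rw [mem_Maxb, Finset.mem_singleton, hmv]
      constructor
      · rintro ⟨u1, u2, _⟩
        simp at u2
        omega
      · rintro rfl
        exact ⟨le_rfl, by simp, rfl⟩
    have ha : Maxa [0] = ∅ := by
      ext j
      rw [mem_Maxa, hmv]
      simp
    rw [hb, ha]
    simp
  · set n := w.length with hn
    set b := (Maxb w).card with hb
    set a := (Maxa w).card with ha
    have hlenA : (((Maxb w).sort (· ≤ ·)).reverse).length = b := by
      simp [Finset.length_sort, hb]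
    have hlenB : (((Maxa w).sort (· ≤ ·)).reverse).length = a := by
      simp [Finset.length_sort, ha]
    have hadm : admissible w =
        ((Maxb w).sort (· ≤ ·)).reverse ++ (((Maxa w).sort (· ≤ ·)).reverse ++ [i0 w - 1]) := by
      rw [admissible, if_neg hne, List.append_assoc]
    have hitot : i < b + a + 1 := by
      rw [length_admissible_of_ne hne] at hi
      omega
    rcases Nat.lt_or_ge i b with hcase | hcase
    · -- Case A
      have hgetD : (admissible w).getD i 0 = (((Maxb w).sort (· ≤ ·)).reverse).getD i 0 := by
        rw [hadm, List.getD_append _ _ _ _ (by omega)]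
      obtain ⟨hcmem, hcfilt⟩ := sort_rev_getD (Maxb w) (i := i) (by omega)
      obtain ⟨h1, h2⟩ := caseA hcmem hcfilt
      rw [hgetD, length_admissible_of_ne (ins_ne_nil _ _), h1, h2]
      omega
    · rcases Nat.lt_or_ge i (b + a) with hcase2 | hcase2
      · -- Case B
        have hgetD : (admissible w).getD i 0 =
            (((Maxa w).sort (· ≤ ·)).reverse).getD (i - b) 0 := by
          rw [hadm, getD_append_right' _ _ _ (by omega), hlenA,
            List.getD_append _ _ _ _ (by omega)]
        obtain ⟨hcmem, hcfilt⟩ := sort_rev_getD (Maxa w) (i := i - b) (by omega)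
        obtain ⟨h1, h2⟩ := caseB hcmem hcfilt
        rw [hgetD, length_admissible_of_ne (ins_ne_nil _ _), h1, h2]
        omega
      · -- Case C
        have hieq : i = b + a := by omega
        have hgetD : (admissible w).getD i 0 = i0 w - 1 := by
          rw [hadm, getD_append_right' _ _ _ (by omega), hlenA,
            getD_append_right' _ _ _ (by omega), hlenB]
          simp [hieq]
        rw [hgetD]
        rcases Nat.eq_zero_or_pos (maxVal w) with hm0 | hm1
        · obtain ⟨hi0, hbn, hMa, hMb', hMa'⟩ := caseC1 hne hm0
          rw [hi0]
          norm_num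
          rw [length_admissible_of_ne (ins_ne_nil _ _), hMb', hMa']
          have ha0 : a = 0 := by rw [ha, hMa]
          omega
        · obtain ⟨h1, h2⟩ := caseC2 hw hne hm1
          rw [length_admissible_of_ne (ins_ne_nil _ _), h1, h2]
          omega
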